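/- Suppose a matrix $M \in \mathbb{C}^{m\times(n+p)}$ satisfies the 2-level weighted robust null space property of order $\bm{J} = (J_1, J_2)$ with scale $\lambda > 0$ and constants $0 < \rho < 1$, $\tau > 0$: for every $\bm{z} \in \mathbb{C}^{n+p}$ and every $S_1 \subseteq [n]$, $S_2 \subseteq n+[p]$ with $|S_1|_{\bm{w}_1} \leq J_1$ and $|S_2|_{\bm{w}_2} \leq J_2$, one has $\|\bm{z}_{S_1\cup S_2}\|_2 \leq \frac{\rho}{\sqrt{J_\lambda}}\|\bm{z}_{(S_1\cup S_2)^c}\|_{1,\bm{w}_\lambda} + \tau\|M\bm{z}\|_2$ where $J_\lambda = J_1 + \lambda^2 J_2$ and $\bm{w}_\lambda = (\bm{w}_1, \lambda\bm{w}_2)$. Then for every $\bm{z}, \hat{\bm{z}} \in \mathbb{C}^{n+p}$: $\|\bm{z}-\hat{\bm{z}}\|_{1,\bm{w}_\lambda} \leq \frac{1+\rho}{1-\rho}\big(2\sigma_{\bm{J}}(\bm{z})_{1,\bm{w}_\lambda} + \|\hat{\bm{z}}\|_{1,\bm{w}_\lambda} - \|\bm{z}\|_{1,\bm{w}_\lambda}\big)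 + \frac{2\tau\sqrt{J_\lambda}}{1-\rho}\|M(\bm{z}-\hat{\bm{z}})\|_2$. -/

import Mathlib

open scoped BigOperators

/-- Scaled weights `w_λ = (w₁, λ w₂)` on a two-block index set. -/
noncomputable def scaledWeights {n p : ℕ} (w1 : Fin n → ℝ) (w2 : Fin p → ℝ) (lam : ℝ) :
    Fin n ⊕ Fin p → ℝ :=
  Sum.elim w1 (fun j => lam * w2 j)

/-- Weighted `ℓ¹` norm with respect to scaled weights. -/
noncomputable def wnorm1Scaled {n p : ℕ} (w1 : Fin n → ℝ) (w2 : Fin p → ℝ) (lam : ℝ)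
    (z : Fin n ⊕ Fin p → ℂ) : ℝ :=
  ∑ i, scaledWeights w1 w2 lam i * ‖z i‖

/-- Best 2-level weighted `J`-term approximation error
`σ_J(z)_{1,w_λ} = inf { ‖z - z'‖_{1,w_λ} : |supp z'ᵢ|_{wᵢ} ≤ Jᵢ, i = 1,2 }`. -/
noncomputable def sigmaJ {n p : ℕ} (w1 : Fin n → ℝ) (w2 : Fin p → ℝ) (lam J1 J2 : ℝ)
    (z : Fin n ⊕ Fin p → ℂ) : ℝ :=
  sInf {t : ℝ | ∃ (S1 : Finset (Fin n)) (S2 : Finset (Fin p)),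
    (∑ i ∈ S1, (w1 i) ^ 2) ≤ J1 ∧ (∑ j ∈ S2, (w2 j) ^ 2) ≤ J2 ∧
    t = (∑ i ∈ S1ᶜ, w1 i * ‖z (Sum.inl i)‖) + lam * ∑ j ∈ S2ᶜ, w2 j * ‖z (Sum.inr j)‖}

set_option maxHeartbeats 1000000 in
/-- 2-level weighted `ℓ¹` distance bound under the 2-level weighted robust null space
property of order `J = (J₁, J₂)` with scale `λ`. -/
theorem two_level_wrnsp_distance_bound {m n p : ℕ}
    (M : Matrix (Fin m) (Fin n ⊕ Fin p) ℂ)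
    (w1 : Fin n → ℝ) (w2 : Fin p → ℝ)
    (hw1 : ∀ i, 0 < w1 i) (hw2 : ∀ j, 0 < w2 j)
    (J1 J2 lam ρ τ : ℝ) (hJ1 : 0 < J1) (hJ2 : 0 < J2) (hlam : 0 < lam)
    (hρ : 0 < ρ) (hρ1 : ρ < 1) (hτ : 0 < τ)
    (hNSP : ∀ z : Fin n ⊕ Fin p → ℂ, ∀ S1 : Finset (Fin n), ∀ S2 : Finset (Fin p),
      (∑ i ∈ S1, (w1 i) ^ 2) ≤ J1 → (∑ j ∈ S2, (w2 j) ^ 2) ≤ J2 →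
      Real.sqrt ((∑ i ∈ S1, ‖z (Sum.inl i)‖ ^ 2) + ∑ j ∈ S2, ‖z (Sum.inr j)‖ ^ 2) ≤
        ρ / Real.sqrt (J1 + lam ^ 2 * J2) *
            ((∑ i ∈ S1ᶜ, w1 i * ‖z (Sum.inl i)‖) + lam * ∑ j ∈ S2ᶜ, w2 j * ‖z (Sum.inr j)‖)
          + τ * Real.sqrt (∑ k, ‖(M.mulVec z) k‖ ^ 2))
    (z zh : Fin n ⊕ Fin p → ℂ) :
    wnorm1Scaled w1 w2 lam (z - zh) ≤
      (1 + ρ) / (1 - ρ) *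
          (2 * sigmaJ w1 w2 lam J1 J2 z + wnorm1Scaled w1 w2 lam zh - wnorm1Scaled w1 w2 lam z)
        + 2 * τ * Real.sqrt (J1 + lam ^ 2 * J2) / (1 - ρ) *
            Real.sqrt (∑ k, ‖(M.mulVec (z - zh)) k‖ ^ 2) := by

  classical
  -- notations
  set Jl : ℝ := J1 + lam ^ 2 * J2 with hJl
  have hJlpos : 0 < Jl := by positivity
  have hsJl : 0 < Real.sqrt Jl := Real.sqrt_pos.mpr hJlpos
  set v : Fin n ⊕ Fin p → ℂ := z - zh with hv
  set Mv : ℝ := Real.sqrt (∑ k, ‖(M.mulVec v) k‖ ^ 2) with hMv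
  have hMvnn : 0 ≤ Mv := Real.sqrt_nonneg _
  -- split of the weighted norm
  have hsplit : ∀ (x : Fin n ⊕ Fin p → ℂ) (S1 : Finset (Fin n)) (S2 : Finset (Fin p)),
      wnorm1Scaled w1 w2 lam x =
        ((∑ i ∈ S1, w1 i * ‖x (Sum.inl i)‖) + lam * ∑ j ∈ S2, w2 j * ‖x (Sum.inr j)‖) +
        ((∑ i ∈ S1ᶜ, w1 i * ‖x (Sum.inl i)‖) + lam * ∑ j ∈ S2ᶜ, w2 j * ‖x (Sum.inr j)‖) := by
    intro x S1 S2
    unfold wnorm1Scaled scaledWeights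
    rw [Fintype.sum_sum_type]
    rw [← Finset.sum_add_sum_compl S1 (fun i => Sum.elim w1 (fun j => lam * w2 j) (Sum.inl i) * ‖x (Sum.inl i)‖),
      ← Finset.sum_add_sum_compl S2 (fun j => Sum.elim w1 (fun j => lam * w2 j) (Sum.inr j) * ‖x (Sum.inr j)‖)]
    simp only [Sum.elim_inl, Sum.elim_inr, Finset.mul_sum, mul_assoc]
    ring
  -- key estimate for each admissible pair of supports
  have key : ∀ (S1 : Finset (Fin n)) (S2 : Finset (Fin p)),
      (∑ i ∈ S1, (w1 i) ^ 2) ≤ J1 → (∑ j ∈ S2, (w2 j) ^ 2) ≤ J2 →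
      wnorm1Scaled w1 w2 lam v ≤
        (1 + ρ) / (1 - ρ) *
          (wnorm1Scaled w1 w2 lam zh - wnorm1Scaled w1 w2 lam z +
            2 * ((∑ i ∈ S1ᶜ, w1 i * ‖z (Sum.inl i)‖) + lam * ∑ j ∈ S2ᶜ, w2 j * ‖z (Sum.inr j)‖))
        + 2 * (τ * Real.sqrt Jl * Mv) / (1 - ρ) := by
    intro S1 S2 hS1 hS2
    set Hv : ℝ := (∑ i ∈ S1, w1 i * ‖v (Sum.inl i)‖) + lam * ∑ j ∈ S2, w2 j * ‖v (Sum.inr j)‖ with hHv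
    set Tv : ℝ := (∑ i ∈ S1ᶜ, w1 i * ‖v (Sum.inl i)‖) + lam * ∑ j ∈ S2ᶜ, w2 j * ‖v (Sum.inr j)‖ with hTv
    set Hz : ℝ := (∑ i ∈ S1, w1 i * ‖z (Sum.inl i)‖) + lam * ∑ j ∈ S2, w2 j * ‖z (Sum.inr j)‖ with hHz
    set Tz : ℝ := (∑ i ∈ S1ᶜ, w1 i * ‖z (Sum.inl i)‖) + lam * ∑ j ∈ S2ᶜ, w2 j * ‖z (Sum.inr j)‖ with hTz
    set Hh : ℝ := (∑ i ∈ S1, w1 i * ‖zh (Sum.inl i)‖) + lam * ∑ j ∈ S2, w2 j * ‖zh (Sum.inr j)‖ with hHh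
    set Th : ℝ := (∑ i ∈ S1ᶜ, w1 i * ‖zh (Sum.inl i)‖) + lam * ∑ j ∈ S2ᶜ, w2 j * ‖zh (Sum.inr j)‖ with hTh
    have hNv : wnorm1Scaled w1 w2 lam v = Hv + Tv := hsplit v S1 S2
    have hNz : wnorm1Scaled w1 w2 lam z = Hz + Tz := hsplit z S1 S2
    have hNh : wnorm1Scaled w1 w2 lam zh = Hh + Th := hsplit zh S1 S2
    set E : ℝ := τ * Real.sqrt Jl * Mv with hE
    have hEnn : 0 ≤ E := by
      rw [hE]
      exact mul_nonneg (mul_nonneg hτ.le (Real.sqrt_nonneg _)) hMvnn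
    -- Cauchy–Schwarz + NSP:  Hv ≤ ρ * Tv + E
    have h1 : Hv ≤ ρ * Tv + E := by
      set X : ℝ := (∑ i ∈ S1, ‖v (Sum.inl i)‖ ^ 2) + ∑ j ∈ S2, ‖v (Sum.inr j)‖ ^ 2 with hX
      have hXnn : 0 ≤ X := by
        rw [hX]
        exact add_nonneg (Finset.sum_nonneg fun i _ => sq_nonneg _)
          (Finset.sum_nonneg fun j _ => sq_nonneg _)
      have hcs : Hv ≤ Real.sqrt Jl * Real.sqrt X := by
        have h := Real.sum_mul_le_sqrt_mul_sqrt (S1.disjSum S2)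
          (scaledWeights w1 w2 lam) (fun i => ‖v i‖)
        rw [Finset.sum_disjSum, Finset.sum_disjSum, Finset.sum_disjSum] at h
        simp only [scaledWeights, Sum.elim_inl, Sum.elim_inr, mul_pow] at h
        have heq1 : Hv ≤
            Real.sqrt ((∑ i ∈ S1, w1 i ^ 2) + ∑ j ∈ S2, lam ^ 2 * w2 j ^ 2) * Real.sqrt X := by
          calc Hv = (∑ i ∈ S1, w1 i * ‖v (Sum.inl i)‖) +
              ∑ j ∈ S2, lam * w2 j * ‖v (Sum.inr j)‖ := by
                rw [hHv, Finset.mul_sum]; ring_nf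
            _ ≤ _ := by rw [hX]; exact h
        refine heq1.trans (mul_le_mul_of_nonneg_right ?_ (Real.sqrt_nonneg _))
        apply Real.sqrt_le_sqrt
        rw [← Finset.mul_sum]
        have : lam ^ 2 * ∑ j ∈ S2, w2 j ^ 2 ≤ lam ^ 2 * J2 :=
          mul_le_mul_of_nonneg_left hS2 (by positivity)
        rw [hJl]; linarith
      have hnsp := hNSP v S1 S2 hS1 hS2
      have h2 : Real.sqrt Jl * Real.sqrt X ≤
          Real.sqrt Jl * (ρ / Real.sqrt Jl * Tv + τ * Mv) :=
        mul_le_mul_of_nonneg_left hnsp (Real.sqrt_nonneg _)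
      have h3 : Real.sqrt Jl * (ρ / Real.sqrt Jl * Tv + τ * Mv) = ρ * Tv + E := by
        rw [hE]; field_simp
      calc Hv ≤ Real.sqrt Jl * Real.sqrt X := hcs
        _ ≤ _ := h2
        _ = ρ * Tv + E := h3
    -- triangle inequalities
    have htri1 : Hz ≤ Hh + Hv := by
      rw [hHz, hHh, hHv]
      have A : ∀ i ∈ S1, w1 i * ‖z (Sum.inl i)‖ ≤
          w1 i * ‖zh (Sum.inl i)‖ + w1 i * ‖v (Sum.inl i)‖ := by
        intro i _
        rw [← mul_add]
        refine mul_le_mul_of_nonneg_left ?_ (hw1 i).le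
        have : z (Sum.inl i) = zh (Sum.inl i) + v (Sum.inl i) := by
          simp [hv, Pi.sub_apply]
        rw [this]; exact norm_add_le _ _
      have B : ∀ j ∈ S2, w2 j * ‖z (Sum.inr j)‖ ≤
          w2 j * ‖zh (Sum.inr j)‖ + w2 j * ‖v (Sum.inr j)‖ := by
        intro j _
        rw [← mul_add]
        refine mul_le_mul_of_nonneg_left ?_ (hw2 j).le
        have : z (Sum.inr j) = zh (Sum.inr j) + v (Sum.inr j) := by
          simp [hv, Pi.sub_apply]
        rw [this]; exact norm_add_le _ _
      have hA := Finset.sum_le_sum A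
      have hB := Finset.sum_le_sum B
      rw [Finset.sum_add_distrib] at hA hB
      have hB' := mul_le_mul_of_nonneg_left hB hlam.le
      rw [mul_add] at hB'
      linarith
    have htri2 : Tv ≤ Th + Tz := by
      rw [hTv, hTh, hTz]
      have A : ∀ i ∈ S1ᶜ, w1 i * ‖v (Sum.inl i)‖ ≤
          w1 i * ‖zh (Sum.inl i)‖ + w1 i * ‖z (Sum.inl i)‖ := by
        intro i _
        rw [← mul_add]
        refine mul_le_mul_of_nonneg_left ?_ (hw1 i).le
        have : v (Sum.inl i) = z (Sum.inl i) - zh (Sum.inl i) := by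
          simp [hv, Pi.sub_apply]
        rw [this]
        refine (norm_sub_le _ _).trans ?_
        linarith [norm_nonneg (z (Sum.inl i)), norm_nonneg (zh (Sum.inl i))]
      have B : ∀ j ∈ S2ᶜ, w2 j * ‖v (Sum.inr j)‖ ≤
          w2 j * ‖zh (Sum.inr j)‖ + w2 j * ‖z (Sum.inr j)‖ := by
        intro j _
        rw [← mul_add]
        refine mul_le_mul_of_nonneg_left ?_ (hw2 j).le
        have : v (Sum.inr j) = z (Sum.inr j) - zh (Sum.inr j) := by
          simp [hv, Pi.sub_apply]
        rw [this]
        refine (norm_sub_le _ _).trans ?_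
        linarith [norm_nonneg (z (Sum.inr j)), norm_nonneg (zh (Sum.inr j))]
      have hA := Finset.sum_le_sum A
      have hB := Finset.sum_le_sum B
      rw [Finset.sum_add_distrib] at hA hB
      have hB' := mul_le_mul_of_nonneg_left hB hlam.le
      rw [mul_add] at hB'
      linarith
    -- combine
    have h2 : Tv ≤ (Hh + Th) - (Hz + Tz) + 2 * Tz + Hv := by linarith
    have hρpos : (0:ℝ) < 1 - ρ := by linarith
    set D : ℝ := (Hh + Th) - (Hz + Tz) + 2 * Tz with hD
    have h4 : (1 - ρ) * (Hv + Tv) ≤ (1 + ρ) * D + 2 * E := by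
      have h2' : Tv - Hv ≤ D := by linarith
      have h2'' := mul_le_mul_of_nonneg_left h2' (show (0:ℝ) ≤ 1 + ρ by linarith)
      nlinarith
    have h5 : Hv + Tv ≤ ((1 + ρ) * D + 2 * E) / (1 - ρ) := by
      rw [le_div_iff₀ hρpos]; linarith
    rw [hNv, hNz, hNh]
    calc Hv + Tv ≤ ((1 + ρ) * D + 2 * E) / (1 - ρ) := h5
      _ = (1 + ρ) / (1 - ρ) * ((Hh + Th) - (Hz + Tz) + 2 * Tz) + 2 * E / (1 - ρ) := by
          rw [hD]; field_simp
  -- pass to the infimum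
  have hρpos : (0:ℝ) < 1 - ρ := by linarith
  set c : ℝ := 2 * ((1 + ρ) / (1 - ρ)) with hc
  have hcpos : 0 < c := by
    rw [hc]
    have := div_pos (show (0:ℝ) < 1 + ρ by linarith) hρpos
    linarith
  set K : ℝ := (1 + ρ) / (1 - ρ) * (wnorm1Scaled w1 w2 lam zh - wnorm1Scaled w1 w2 lam z)
      + 2 * (τ * Real.sqrt Jl * Mv) / (1 - ρ) with hK
  have hinf : (wnorm1Scaled w1 w2 lam v - K) / c ≤ sigmaJ w1 w2 lam J1 J2 z := by
    unfold sigmaJ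
    refine le_csInf ⟨_, ∅, ∅, by simpa using hJ1.le, by simpa using hJ2.le, rfl⟩ ?_
    rintro t ⟨S1, S2, hS1, hS2, rfl⟩
    rw [div_le_iff₀ hcpos]
    have hk := key S1 S2 hS1 hS2
    have heq : (1 + ρ) / (1 - ρ) *
          (wnorm1Scaled w1 w2 lam zh - wnorm1Scaled w1 w2 lam z +
            2 * ((∑ i ∈ S1ᶜ, w1 i * ‖z (Sum.inl i)‖) + lam * ∑ j ∈ S2ᶜ, w2 j * ‖z (Sum.inr j)‖))
        + 2 * (τ * Real.sqrt Jl * Mv) / (1 - ρ)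
        = ((∑ i ∈ S1ᶜ, w1 i * ‖z (Sum.inl i)‖) + lam * ∑ j ∈ S2ᶜ, w2 j * ‖z (Sum.inr j)‖) * c
          + K := by
      rw [hK, hc]; ring
    have hk2 := hk.trans_eq heq
    linarith [hk2]
  rw [div_le_iff₀ hcpos] at hinf
  have hgoal : (1 + ρ) / (1 - ρ) *
      (2 * sigmaJ w1 w2 lam J1 J2 z + wnorm1Scaled w1 w2 lam zh - wnorm1Scaled w1 w2 lam z)
      + 2 * τ * Real.sqrt Jl / (1 - ρ) * Mv
      = sigmaJ w1 w2 lam J1 J2 z * c + K := by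
    rw [hc, hK]; ring
  rw [hgoal]
  linarith
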